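/- Let K and H be complex Hilbert spaces, let R : K → K be a self-adjoint unitary operator (R* = R and R² = 1), let P₁ and P₂ be orthogonal projections on K with range(P₂) ⊆ range(P₁) and with R ∘ P₂ = P₂, and let V : K → H be a linear map satisfying ⟨V F, V G⟩_H = ⟨R F, G⟩_K for all F, G ∈ range(P₁). Then P₁ ∘ R ∘ P₁ = P₂ if and only if the closure of V(range(P₁)) in H equals the closure of V(range(P₂)) in H. -/

import Mathlib

local notation "⟪" x ", " y "⟫" => @inner ℂ _ _ x y

/-- Let `K`, `H` be complex Hilbert spaces, `R` a self-adjoint unitary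
on `K`, `P₁`, `P₂` orthogonal projections with `range P₂ ⊆ range P₁` and `R ∘ P₂ = P₂`,
and `V : K → H` a linear map with `⟨V F, V G⟩ = ⟨R F, G⟩` for `F, G ∈ range P₁`.
Then `P₁ ∘ R ∘ P₁ = P₂` iff the closures of `V(range P₁)` and `V(range P₂)` in `H`
coincide. -/
theorem stmt_7
    (K H : Type)
    [NormedAddCommGroup K] [InnerProductSpace ℂ K] [CompleteSpace K]
    [NormedAddCommGroup H] [InnerProductSpace ℂ H] [CompleteSpace H]
    (R P₁ P₂ : K →L[ℂ] K)
    (hRsa : star R = R) (hRunit : R * R = 1)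
    (hP₁sa : star P₁ = P₁) (hP₁idem : P₁ * P₁ = P₁)
    (hP₂sa : star P₂ = P₂) (hP₂idem : P₂ * P₂ = P₂)
    (hrange : Set.range P₂ ⊆ Set.range P₁)
    (hRP₂ : R ∘L P₂ = P₂)
    (V : K →ₗ[ℂ] H)
    (hV : ∀ F G : K, F ∈ Set.range P₁ → G ∈ Set.range P₁ →
      (inner ℂ (V F) (V G) : ℂ) = inner ℂ (R F) G) :
    P₁ ∘L R ∘L P₁ = P₂ ↔
      closure (V '' Set.range P₁) = closure (V '' Set.range P₂) := by
  -- self-adjointness as an inner product identity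
  have sa : ∀ (A : K →L[ℂ] K), star A = A → ∀ x y : K, ⟪A x, y⟫ = ⟪x, A y⟫ := by
    intro A hA x y
    conv_lhs => rw [← hA, ContinuousLinearMap.star_eq_adjoint]
    rw [ContinuousLinearMap.adjoint_inner_left]
  have fix₁ : ∀ x, x ∈ Set.range P₁ → P₁ x = x := by
    rintro x ⟨w, rfl⟩
    rw [← ContinuousLinearMap.mul_apply, hP₁idem]
  have fix₂ : ∀ x, x ∈ Set.range P₂ → P₂ x = x := by
    rintro x ⟨w, rfl⟩
    rw [← ContinuousLinearMap.mul_apply, hP₂idem]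
  have hP₁P₂ : ∀ z, P₁ (P₂ z) = P₂ z := fun z => fix₁ _ (hrange ⟨z, rfl⟩)
  have hRfix₂ : ∀ x, x ∈ Set.range P₂ → R x = x := by
    rintro x ⟨w, rfl⟩
    rw [← ContinuousLinearMap.comp_apply, hRP₂]
  have hP₁P₂op : P₁ * P₂ = P₂ := by ext z; exact hP₁P₂ z
  have hP₂P₁op : P₂ * P₁ = P₂ := by
    have := congrArg star hP₁P₂op
    rwa [star_mul, hP₁sa, hP₂sa] at this
  have hP₂P₁ : ∀ z, P₂ (P₁ z) = P₂ z := fun z => by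
    rw [← ContinuousLinearMap.mul_apply, hP₂P₁op]
  constructor
  · intro h
    -- V F = V (P₂ F) for F in range P₁
    have key : ∀ F ∈ Set.range P₁, V F = V (P₂ F) := by
      intro F hF
      have hF1 : P₁ F = F := fix₁ F hF
      have hmem : F - P₂ F ∈ Set.range P₁ :=
        ⟨F - P₂ F, by rw [map_sub, hF1, hP₁P₂ F]⟩
      have happ : P₁ (R (P₁ F)) = P₂ F := by
        have := congrArg (fun (A : K →L[ℂ] K) => A F) h
        simpa using this
      have t1 : ⟪R F, F⟫ = ⟪P₂ F, F⟫ := by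
        calc ⟪R F, F⟫ = ⟪R (P₁ F), P₁ F⟫ := by rw [hF1]
        _ = ⟪P₁ (R (P₁ F)), F⟫ := (sa P₁ hP₁sa _ _).symm
        _ = ⟪P₂ F, F⟫ := by rw [happ]
      have t2 : ⟪R F, P₂ F⟫ = ⟪P₂ F, F⟫ := by
        rw [sa R hRsa, hRfix₂ _ ⟨F, rfl⟩, ← sa P₂ hP₂sa]
      have t3 : ⟪R (P₂ F), F⟫ = ⟪P₂ F, F⟫ := by
        rw [hRfix₂ _ ⟨F, rfl⟩]
      have t4 : ⟪R (P₂ F), P₂ F⟫ = ⟪P₂ F, F⟫ := by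
        rw [hRfix₂ _ ⟨F, rfl⟩, ← sa P₂ hP₂sa, fix₂ _ ⟨F, rfl⟩]
      have h0 : ⟪V (F - P₂ F), V (F - P₂ F)⟫ = 0 := by
        rw [hV _ _ hmem hmem, map_sub, inner_sub_left, inner_sub_right,
          inner_sub_right, t1, t2, t3, t4]
        ring
      have hz : V (F - P₂ F) = 0 := inner_self_eq_zero.mp h0
      rw [map_sub] at hz
      exact sub_eq_zero.mp hz
    have himg : V '' Set.range P₁ = V '' Set.range P₂ := by
      apply Set.Subset.antisymm
      · rintro y ⟨F, hF, rfl⟩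
        exact ⟨P₂ F, ⟨F, rfl⟩, (key F hF).symm⟩
      · exact Set.image_mono hrange
    rw [himg]
  · intro h
    -- main identity: ⟪R F, G⟫ = ⟪F, P₂ G⟫ for F, G in range P₁
    have main : ∀ F ∈ Set.range P₁, ∀ G ∈ Set.range P₁, ⟪R F, G⟫ = ⟪F, P₂ G⟫ := by
      intro F hF G hG
      have hP₂G : P₂ G ∈ Set.range P₁ := hrange ⟨G, rfl⟩
      -- the set of vectors orthogonal to V G - V (P₂ G)
      set S : Set H := {y : H | ⟪y, V G - V (P₂ G)⟫ = 0} with hS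
      have hclosed : IsClosed S :=
        isClosed_eq (Continuous.inner continuous_id continuous_const) continuous_const
      have hsub : V '' Set.range P₂ ⊆ S := by
        rintro y ⟨F', hF', rfl⟩
        have hF'₁ : F' ∈ Set.range P₁ := hrange hF'
        show ⟪V F', V G - V (P₂ G)⟫ = 0
        rw [inner_sub_right, hV _ _ hF'₁ hG, hV _ _ hF'₁ hP₂G,
          hRfix₂ _ hF', ← sa P₂ hP₂sa, fix₂ _ hF', sub_self]
      have hVF : V F ∈ S := by
        have : closure (V '' Set.range P₁) ⊆ S := by
          rw [h]; exact closure_minimal hsub hclosed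
        exact this (subset_closure ⟨F, hF, rfl⟩)
      have : ⟪V F, V G⟫ = ⟪V F, V (P₂ G)⟫ := by
        have := hVF
        rw [hS, Set.mem_setOf_eq, inner_sub_right, sub_eq_zero] at this
        exact this
      rw [hV _ _ hF hG, hV _ _ hF hP₂G] at this
      rw [this, sa R hRsa, hRfix₂ (P₂ G) ⟨G, rfl⟩]
    ext x
    apply ext_inner_right ℂ
    intro v
    show ⟪P₁ (R (P₁ x)), v⟫ = ⟪P₂ x, v⟫
    rw [sa P₁ hP₁sa, main (P₁ x) ⟨x, rfl⟩ (P₁ v) ⟨v, rfl⟩, hP₂P₁ v,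
      ← sa P₂ hP₂sa, hP₂P₁ x]
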